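/- There is an absolute constant κ > 0 such that for every n ≥ 1 and every symmetric function f ∈ 𝕊_n, there exist u ∈ ℝ^{4n+2} and c ∈ ℝ with ‖u‖² + c² = 1 such that f(x)·(u·v_x + c) ≥ κ/n for all x ∈ {0,1}^n, where v_x is the hidden-layer embedding under the explicit initialization. That is, any labeling of the embedded cube that agrees with a symmetric function is linearly separable with margin Ω(1/n). -/

import Mathlib

/-- The Hamming weight |x| of x ∈ {0,1}^n. -/
def hw {n : ℕ} (x : Fin n → Bool) : ℕ := (Finset.univ.filter (fun i => x i)).card

/-- The symmetric function f_A : f_A(x) = 1 if |x| ∈ A, and −1 otherwise. -/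
def fA {n : ℕ} (A : Finset ℕ) (x : Fin n → Bool) : ℝ := if hw x ∈ A then 1 else -1

/-- x ∈ {0,1}^n viewed as a real vector. -/
def toR {n : ℕ} (x : Fin n → Bool) : Fin n → ℝ := fun i => if x i then 1 else 0

/-- Explicit initialization of the hidden weights: W⁰_{ij} = (−1)^{i+1} for 1-indexed
i ∈ {1,...,4n+2}; in 0-indexed form W⁰ i j = (−1)^i. -/
def W0 (n : ℕ) : Matrix (Fin (4 * n + 2)) (Fin n) ℝ := fun i _ => (-1 : ℝ) ^ (i : ℕ)

/-- Explicit initialization of the hidden biases: B⁰_i = 0.5·(−1)^i·⌊(i−1)/2⌋ for 1-indexed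
i ∈ {1,...,4n+2}; in 0-indexed form B⁰ i = 0.5·(−1)^{i+1}·⌊i/2⌋. -/
noncomputable def B0 (n : ℕ) : Fin (4 * n + 2) → ℝ :=
  fun i => 0.5 * (-1 : ℝ) ^ ((i : ℕ) + 1) * (((i : ℕ) / 2 : ℕ) : ℝ)

/-- The hidden-layer embedding v_x = ReLU(W⁰x + B⁰) under the explicit initialization. -/
noncomputable def vX (n : ℕ) (x : Fin n → Bool) : Fin (4 * n + 2) → ℝ :=
  fun i => max 0 ((W0 n).mulVec (toR x) i + B0 n i)

lemma sumIte {N a : ℕ} (h : a < N) (c : ℝ) (g : Fin N → ℝ) :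
    ∑ i : Fin N, (if (i : ℕ) = a then c else 0) * g i = c * g ⟨a, h⟩ := by
  rw [Finset.sum_eq_single (⟨a, h⟩ : Fin N)]
  · simp
  · intro b _ hb
    rw [if_neg (fun hh => hb (Fin.ext hh)), zero_mul]
  · intro hmem; exact absurd (Finset.mem_univ _) hmem

lemma vX_eq (n : ℕ) (x : Fin n → Bool) (i : Fin (4 * n + 2)) :
    vX n x i = max 0 ((-1 : ℝ) ^ (i : ℕ) * ((hw x : ℝ) - (((i : ℕ) / 2 : ℕ) : ℝ) / 2)) := by
  have hsum : (∑ j, toR x j) = (hw x : ℝ) := by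
    simp [toR, hw, Finset.sum_boole]
  have hmv : (W0 n).mulVec (toR x) i = (-1 : ℝ) ^ (i : ℕ) * (hw x : ℝ) := by
    simp only [Matrix.mulVec, dotProduct, W0]
    rw [← Finset.mul_sum, hsum]
  unfold vX
  rw [hmv]
  unfold B0
  rw [pow_succ]
  norm_num
  ring_nf

lemma step (K j : ℕ) (hj : 1 ≤ j) :
    2 * max 0 ((K : ℝ) - ((2 * j - 1 : ℕ) : ℝ) / 2) - 2 * max 0 ((K : ℝ) - (j : ℝ)) =
      if j ≤ K then 1 else 0 := by
  have hc : ((2 * j - 1 : ℕ) : ℝ) = 2 * (j : ℝ) - 1 := by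
    have h1 : (2 * j - 1 : ℕ) + 1 = 2 * j := by omega
    have := congrArg (Nat.cast : ℕ → ℝ) h1
    push_cast at this; linarith
  rw [hc]
  by_cases h : j ≤ K
  · have : (j : ℝ) ≤ K := by exact_mod_cast h
    rw [if_pos h, max_eq_right (by linarith), max_eq_right (by linarith)]; ring
  · have h2 : K + 1 ≤ j := by omega
    have : (K : ℝ) + 1 ≤ j := by exact_mod_cast h2
    rw [if_neg h, max_eq_left (by linarith), max_eq_left (by linarith)]; ring

lemma tele (s : ℕ → ℝ) (K : ℕ) : ∑ j ∈ Finset.Icc 1 K, (s j - s (j - 1)) = s K - s 0 := by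
  induction K with
  | zero => simp
  | succ k ih =>
    rw [Finset.sum_Icc_succ_top (by omega), ih]
    simp

/-- The key dot-product computation. -/
lemma dot_eq (n : ℕ) (hn : 1 ≤ n) (s : ℕ → ℝ) (x : Fin n → Bool) :
    ∑ i : Fin (4 * n + 2),
      (∑ j ∈ Finset.Icc 1 n, (s j - s (j - 1)) *
        ((if (i : ℕ) = 4 * j - 2 then (2:ℝ) else 0) + (if (i : ℕ) = 4 * j then (-2:ℝ) else 0)))
        * vX n x i
      = s (hw x) - s 0 := by
  have hK : hw x ≤ n := by
    have := Finset.card_filter_le (Finset.univ : Finset (Fin n)) (fun i => x i = true)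
    simpa [hw] using this
  simp_rw [Finset.sum_mul]
  rw [Finset.sum_comm]
  have hinner : ∀ j ∈ Finset.Icc 1 n,
      ∑ i : Fin (4 * n + 2), (s j - s (j - 1)) *
        ((if (i : ℕ) = 4 * j - 2 then (2:ℝ) else 0) + (if (i : ℕ) = 4 * j then (-2:ℝ) else 0))
        * vX n x i
      = (s j - s (j - 1)) * (if j ≤ hw x then 1 else 0) := by
    intro j hj
    obtain ⟨hj1, hjn⟩ := Finset.mem_Icc.mp hj
    have h1 : 4 * j - 2 < 4 * n + 2 := by omega
    have h2 : 4 * j < 4 * n + 2 := by omega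
    have hsplit : ∀ i : Fin (4 * n + 2),
        (s j - s (j - 1)) *
          ((if (i : ℕ) = 4 * j - 2 then (2:ℝ) else 0) + (if (i : ℕ) = 4 * j then (-2:ℝ) else 0))
          * vX n x i
        = (s j - s (j - 1)) *
            ((if (i : ℕ) = 4 * j - 2 then (2:ℝ) else 0) * vX n x i
              + (if (i : ℕ) = 4 * j then (-2:ℝ) else 0) * vX n x i) := fun i => by ring
    rw [Finset.sum_congr rfl (fun i _ => hsplit i), ← Finset.mul_sum,
      Finset.sum_add_distrib, sumIte h1, sumIte h2, vX_eq, vX_eq]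
    have e1 : ((4 * j - 2 : ℕ) / 2 : ℕ) = 2 * j - 1 := by omega
    have p1 : (-1 : ℝ) ^ (4 * j - 2 : ℕ) = 1 :=
      Even.neg_one_pow ⟨2 * j - 1, by omega⟩
    have p2 : (-1 : ℝ) ^ (4 * j : ℕ) = 1 :=
      Even.neg_one_pow ⟨2 * j, by omega⟩
    simp only [Fin.val_mk]
    rw [e1, p1, p2, show ((4 * j : ℕ) / 2 : ℕ) = 2 * j from by omega]
    have e2 : (((2 * j : ℕ) : ℝ)) / 2 = (j : ℝ) := by push_cast; ring
    rw [e2]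
    have hstep := step (hw x) j hj1
    rw [← hstep]
    ring
  rw [Finset.sum_congr rfl hinner]
  have hsel : ∀ j ∈ Finset.Icc 1 n,
      (s j - s (j - 1)) * (if j ≤ hw x then (1:ℝ) else 0)
      = if j ≤ hw x then (s j - s (j - 1)) else 0 := by
    intro j _; split_ifs <;> ring
  rw [Finset.sum_congr rfl hsel,
    ← Finset.sum_subset (Finset.Icc_subset_Icc_right hK)
      (by
        intro j hjn hjK
        rw [if_neg]
        intro hle
        exact hjK (Finset.mem_Icc.mpr ⟨(Finset.mem_Icc.mp hjn).1, hle⟩)),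
    Finset.sum_congr rfl (fun j hj => if_pos (Finset.mem_Icc.mp hj).2), tele]


/-- Any labeling of the embedded cube that agrees with a symmetric function is linearly
separable with margin Ω(1/n). -/
theorem stmt11 :
    ∃ κ : ℝ, 0 < κ ∧
      ∀ n : ℕ, 1 ≤ n → ∀ f : (Fin n → Bool) → ℝ,
        (∃ A : Finset ℕ, A ⊆ Finset.range (n + 1) ∧ f = fA A) →
        ∃ (u : Fin (4 * n + 2) → ℝ) (c : ℝ),
          (∑ i, (u i) ^ 2) + c ^ 2 = 1 ∧
          ∀ x : Fin n → Bool, κ / (n : ℝ) ≤ f x * ((∑ i, u i * vX n x i) + c) := by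
  refine ⟨1/6, by norm_num, ?_⟩
  intro n hn f hf
  obtain ⟨A, hA, rfl⟩ := hf
  set s : ℕ → ℝ := fun j => if j ∈ A then 1 else -1 with hs
  set u0 : Fin (4 * n + 2) → ℝ := fun i =>
    ∑ j ∈ Finset.Icc 1 n, (s j - s (j - 1)) *
      ((if (i : ℕ) = 4 * j - 2 then (2:ℝ) else 0) + (if (i : ℕ) = 4 * j then (-2:ℝ) else 0))
    with hu0
  have hsval : ∀ m : ℕ, s m = 1 ∨ s m = -1 := by
    intro m; by_cases h : m ∈ A
    · left; simp [hs, h]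
    · right; simp [hs, h]
  -- norm bound
  have hGsq : ∀ j ∈ Finset.Icc 1 n,
      ∑ i : Fin (4 * n + 2),
        ((s j - s (j - 1)) *
          ((if (i : ℕ) = 4 * j - 2 then (2:ℝ) else 0) + (if (i : ℕ) = 4 * j then (-2:ℝ) else 0))) ^ 2
      ≤ 32 := by
    intro j hj
    obtain ⟨hj1, hjn⟩ := Finset.mem_Icc.mp hj
    have h1 : 4 * j - 2 < 4 * n + 2 := by omega
    have h2 : 4 * j < 4 * n + 2 := by omega
    have hd : (s j - s (j - 1)) ^ 2 ≤ 4 := by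
      rcases hsval j with h | h <;> rcases hsval (j - 1) with h' | h' <;>
        rw [h, h'] <;> norm_num
    have hpt : ∀ i : Fin (4 * n + 2),
        ((s j - s (j - 1)) *
          ((if (i : ℕ) = 4 * j - 2 then (2:ℝ) else 0) + (if (i : ℕ) = 4 * j then (-2:ℝ) else 0))) ^ 2
        = (s j - s (j - 1)) ^ 2 *
            ((if (i : ℕ) = 4 * j - 2 then (4:ℝ) else 0) * 1 + (if (i : ℕ) = 4 * j then (4:ℝ) else 0) * 1) := by
      intro i
      have hne : ¬((i : ℕ) = 4 * j - 2 ∧ (i : ℕ) = 4 * j) := by omega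
      split_ifs with ha hb hb
      · exact absurd ⟨ha, hb⟩ hne
      all_goals ring
    rw [Finset.sum_congr rfl (fun i _ => hpt i), ← Finset.mul_sum, Finset.sum_add_distrib,
      sumIte h1, sumIte h2]
    nlinarith [hd, sq_nonneg (s j - s (j - 1))]
  have hnorm : ∑ i, (u0 i) ^ 2 ≤ 32 * (n : ℝ) ^ 2 := by
    have hCS : ∀ i : Fin (4 * n + 2), (u0 i) ^ 2 ≤ (n : ℝ) *
        ∑ j ∈ Finset.Icc 1 n,
          ((s j - s (j - 1)) *
            ((if (i : ℕ) = 4 * j - 2 then (2:ℝ) else 0) + (if (i : ℕ) = 4 * j then (-2:ℝ) else 0))) ^ 2 := by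
      intro i
      have := sq_sum_le_card_mul_sum_sq (s := Finset.Icc 1 n)
        (f := fun j => (s j - s (j - 1)) *
          ((if (i : ℕ) = 4 * j - 2 then (2:ℝ) else 0) + (if (i : ℕ) = 4 * j then (-2:ℝ) else 0)))
      rw [Nat.card_Icc] at this
      simpa [hu0, Nat.add_sub_cancel] using this
    calc ∑ i, (u0 i) ^ 2
        ≤ ∑ i : Fin (4 * n + 2), (n : ℝ) *
            ∑ j ∈ Finset.Icc 1 n,
              ((s j - s (j - 1)) *
                ((if (i : ℕ) = 4 * j - 2 then (2:ℝ) else 0) + (if (i : ℕ) = 4 * j then (-2:ℝ) else 0))) ^ 2 :=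
          Finset.sum_le_sum (fun i _ => hCS i)
      _ = (n : ℝ) * ∑ j ∈ Finset.Icc 1 n, ∑ i : Fin (4 * n + 2),
            ((s j - s (j - 1)) *
              ((if (i : ℕ) = 4 * j - 2 then (2:ℝ) else 0) + (if (i : ℕ) = 4 * j then (-2:ℝ) else 0))) ^ 2 := by
          rw [← Finset.mul_sum, Finset.sum_comm]
      _ ≤ (n : ℝ) * ∑ _j ∈ Finset.Icc 1 n, (32 : ℝ) := by
          have hn0 : (0:ℝ) ≤ (n:ℝ) := by positivity
          exact mul_le_mul_of_nonneg_left (Finset.sum_le_sum hGsq) hn0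
      _ ≤ 32 * (n : ℝ) ^ 2 := by
          rw [Finset.sum_const, Nat.card_Icc, Nat.add_sub_cancel]
          rw [nsmul_eq_mul]; push_cast; nlinarith [(Nat.one_le_cast (α := ℝ)).mpr hn]
  set T : ℝ := (∑ i, (u0 i) ^ 2) + (s 0) ^ 2 with hT
  have hs0sq : (s 0) ^ 2 = 1 := by rcases hsval 0 with h | h <;> rw [h] <;> norm_num
  have hT1 : 1 ≤ T := by
    have : 0 ≤ ∑ i, (u0 i) ^ 2 := Finset.sum_nonneg (fun i _ => sq_nonneg _)
    rw [hT, hs0sq]; linarith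
  have hT0 : 0 < T := by linarith
  have hTle : T ≤ 36 * (n : ℝ) ^ 2 := by
    have hn1 : (1:ℝ) ≤ (n:ℝ) := Nat.one_le_cast.mpr hn
    rw [hT, hs0sq]; nlinarith
  have hsT : Real.sqrt T ≤ 6 * (n : ℝ) := by
    have h6 : (0:ℝ) ≤ 6 * (n:ℝ) := by positivity
    have : Real.sqrt T ≤ Real.sqrt ((6 * (n:ℝ)) ^ 2) := Real.sqrt_le_sqrt (by nlinarith)
    rwa [Real.sqrt_sq h6] at this
  have hsT0 : 0 < Real.sqrt T := Real.sqrt_pos.mpr hT0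
  refine ⟨fun i => u0 i / Real.sqrt T, s 0 / Real.sqrt T, ?_, ?_⟩
  · have hsq : (Real.sqrt T) ^ 2 = T := Real.sq_sqrt hT0.le
    simp only [div_pow, hsq]
    rw [← Finset.sum_div, ← add_div, ← hT, div_self hT0.ne']
  · intro x
    have hdot := dot_eq n hn s x
    have hux : ∑ i, (u0 i / Real.sqrt T) * vX n x i = (s (hw x) - s 0) / Real.sqrt T := by
      rw [← hdot, Finset.sum_div]
      refine Finset.sum_congr rfl (fun i _ => ?_)
      simp only [hu0, div_mul_eq_mul_div]
    rw [hux, ← add_div]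
    have hfx : fA A x = s (hw x) := by simp [fA, hs]
    rw [hfx]
    have : s (hw x) - s 0 + s 0 = s (hw x) := by ring
    rw [this]
    have hsk : s (hw x) * s (hw x) = 1 := by rcases hsval (hw x) with h | h <;> rw [h] <;> norm_num
    have hval : s (hw x) * (s (hw x) / Real.sqrt T) = 1 / Real.sqrt T := by
      rw [← mul_div_assoc, hsk]
    rw [hval, div_div]
    exact one_div_le_one_div_of_le hsT0 (by linarith)
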